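/- In the Diaconis–Fulton representation, if α and β are two τ-legal toppling sequences contained in a finite set U that both stabilize a configuration η in U, then their odometers agree, m_α = m_β, and they produce the same final configuration (Abelian property). -/

import Mathlib

/-- The state of a site: `act m` means `m` active particles, `sleep` means one
sleeping particle. -/
inductive SiteState : Type
  | act : ℕ → SiteState
  | sleep : SiteState
deriving DecidableEq

/-- The rank of a site state for the total order `0 < 𝔰 < 1 < 2 < ⋯`. -/
def SiteState.rank : SiteState → ℕ
  | .act 0 => 0
  | .sleep => 1
  | .act (n + 1) => n + 2

/-- A toppling instruction: either a sleep instruction or a jump instruction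
towards a vertex. -/
inductive Instr (V : Type*) : Type _
  | sleep : Instr V
  | jump : V → Instr V

variable {V : Type*} [DecidableEq V]

/-- Removing one particle from a site (with the convention `𝔰 − 1 = 0`). -/
def SiteState.dec : SiteState → SiteState
  | .act (n + 1) => .act n
  | .act 0 => .act 0
  | .sleep => .act 0

/-- Adding one (active) particle to a site: a sleeping particle is woken up. -/
def SiteState.inc : SiteState → SiteState
  | .act n => .act (n + 1)
  | .sleep => .act 2

/-- The effect of an instruction performed at site `x` on the configuration `η`:
a sleep instruction puts a lone active particle at `x` to sleep, a jump
instruction moves one particle from `x` to its target. -/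
def applyInstr (ins : Instr V) (x : V) (η : V → SiteState) : V → SiteState :=
  match ins with
  | .sleep => if η x = .act 1 then Function.update η x .sleep else η
  | .jump y =>
      let η' := Function.update η x (SiteState.dec (η x))
      Function.update η' y (SiteState.inc (η' y))

/-- Toppling the site `x`: apply the next unused instruction of the stack at `x`
and increment the odometer there. -/
def topple (τ : V → ℕ → Instr V) (x : V) (s : (V → SiteState) × (V → ℕ)) :
    (V → SiteState) × (V → ℕ) :=
  (applyInstr (τ x (s.2 x)) x s.1, Function.update s.2 x (s.2 x + 1))

/-- Running a sequence of topplings. -/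
def runSeq (τ : V → ℕ → Instr V) : List V → ((V → SiteState) × (V → ℕ)) →
    (V → SiteState) × (V → ℕ)
  | [], s => s
  | x :: α, s => runSeq τ α (topple τ x s)

/-- A toppling sequence is legal if each toppling happens at a currently
unstable site (a site holding at least one active particle). -/
def LegalSeq (τ : V → ℕ → Instr V) : List V → ((V → SiteState) × (V → ℕ)) → Prop
  | [], _ => True
  | x :: α, s => 2 ≤ (s.1 x).rank ∧ LegalSeq τ α (topple τ x s)

/-- A toppling sequence is acceptable if each toppling happens at a currently
occupied site (holding at least a sleeping particle). -/
def AcceptableSeq (τ : V → ℕ → Instr V) : List V → ((V → SiteState) × (V → ℕ)) → Prop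
  | [], _ => True
  | x :: α, s => 1 ≤ (s.1 x).rank ∧ AcceptableSeq τ α (topple τ x s)

/-- A configuration is stable in `U` if every site of `U` holds either no particle
or one sleeping particle. -/
def StableIn (U : Set V) (η : V → SiteState) : Prop :=
  ∀ x ∈ U, (η x).rank ≤ 1

lemma rank_ge_two_iff (s : SiteState) : 2 ≤ s.rank ↔ ∃ n, s = .act (n+1) := by
  cases s with
  | act n => cases n <;> simp [SiteState.rank]
  | sleep => simp [SiteState.rank]

lemma preserve {x y : V} (hxy : x ≠ y) (i : Instr V) (η : V → SiteState)
    (h : 2 ≤ (η x).rank) : 2 ≤ ((applyInstr i y η) x).rank := by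
  rw [rank_ge_two_iff] at h ⊢
  obtain ⟨n, hn⟩ := h
  cases i with
  | sleep =>
      simp only [applyInstr]
      split
      · simp [Function.update_apply, hxy, hn]
      · exact ⟨n, hn⟩
  | jump z =>
      simp only [applyInstr, Function.update_apply]
      by_cases hzx : x = z
      · subst hzx
        simp [hxy, hn, SiteState.inc]
      · simp [hzx, hxy, hn]


lemma applyInstr_sleep_apply (x z : V) (η : V → SiteState) :
    applyInstr .sleep x η z =
      if η x = .act 1 then (if z = x then .sleep else η z) else η z := by
  simp only [applyInstr]
  split_ifs <;> simp_all [Function.update_apply]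

lemma applyInstr_jump_apply (x u z : V) (η : V → SiteState) :
    applyInstr (.jump u) x η z =
      if z = u then SiteState.inc (if u = x then SiteState.dec (η x) else η u)
      else if z = x then SiteState.dec (η x) else η z := by
  simp only [applyInstr, Function.update_apply]

set_option maxHeartbeats 1000000 in
lemma comm_ss {x y : V} (hxy : x ≠ y) (η : V → SiteState)
    (hx : 2 ≤ (η x).rank) (hy : 2 ≤ (η y).rank) (z : V) :
    applyInstr .sleep y (applyInstr .sleep x η) z
      = applyInstr .sleep x (applyInstr .sleep y η) z := by
  rw [rank_ge_two_iff] at hx hy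
  obtain ⟨a, ha⟩ := hx; obtain ⟨b, hb⟩ := hy
  simp only [applyInstr_sleep_apply]
  split_ifs <;> simp_all

set_option maxHeartbeats 1000000 in
lemma comm_sj {x y : V} (hxy : x ≠ y) (v : V) (η : V → SiteState)
    (hx : 2 ≤ (η x).rank) (hy : 2 ≤ (η y).rank) (z : V) :
    applyInstr (.jump v) y (applyInstr .sleep x η) z
      = applyInstr .sleep x (applyInstr (.jump v) y η) z := by
  rw [rank_ge_two_iff] at hx hy
  obtain ⟨a, ha⟩ := hx; obtain ⟨b, hb⟩ := hy
  simp only [applyInstr_sleep_apply, applyInstr_jump_apply]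
  split_ifs <;> subst_vars <;> simp_all [SiteState.inc, SiteState.dec]

set_option maxHeartbeats 1000000 in
lemma comm_js {x y : V} (hxy : x ≠ y) (u : V) (η : V → SiteState)
    (hx : 2 ≤ (η x).rank) (hy : 2 ≤ (η y).rank) (z : V) :
    applyInstr .sleep y (applyInstr (.jump u) x η) z
      = applyInstr (.jump u) x (applyInstr .sleep y η) z := by
  rw [rank_ge_two_iff] at hx hy
  obtain ⟨a, ha⟩ := hx; obtain ⟨b, hb⟩ := hy
  simp only [applyInstr_sleep_apply, applyInstr_jump_apply]
  split_ifs <;> subst_vars <;> simp_all [SiteState.inc, SiteState.dec]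

set_option maxHeartbeats 2000000 in
lemma comm_jj {x y : V} (hxy : x ≠ y) (u v : V) (η : V → SiteState)
    (hx : 2 ≤ (η x).rank) (hy : 2 ≤ (η y).rank) (z : V) :
    applyInstr (.jump v) y (applyInstr (.jump u) x η) z
      = applyInstr (.jump u) x (applyInstr (.jump v) y η) z := by
  rw [rank_ge_two_iff] at hx hy
  obtain ⟨a, ha⟩ := hx; obtain ⟨b, hb⟩ := hy
  simp only [applyInstr_jump_apply]
  split_ifs <;> subst_vars <;> simp_all [SiteState.inc, SiteState.dec]

lemma applyInstr_comm {x y : V} (hxy : x ≠ y) (i j : Instr V) (η : V → SiteState)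
    (hx : 2 ≤ (η x).rank) (hy : 2 ≤ (η y).rank) :
    applyInstr j y (applyInstr i x η) = applyInstr i x (applyInstr j y η) := by
  funext z
  cases i with
  | sleep => cases j with
    | sleep => exact comm_ss hxy η hx hy z
    | jump v => exact comm_sj hxy v η hx hy z
  | jump u => cases j with
    | sleep => exact comm_js hxy u η hx hy z
    | jump v => exact comm_jj hxy u v η hx hy z

lemma topple_comm (τ : V → ℕ → Instr V) {x y : V} (hxy : x ≠ y)
    (s : (V → SiteState) × (V → ℕ)) (hx : 2 ≤ (s.1 x).rank) (hy : 2 ≤ (s.1 y).rank) :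
    topple τ y (topple τ x s) = topple τ x (topple τ y s) := by
  have h1 : Function.update s.2 x (s.2 x + 1) y = s.2 y :=
    Function.update_of_ne (Ne.symm hxy) _ _
  have h2 : Function.update s.2 y (s.2 y + 1) x = s.2 x :=
    Function.update_of_ne hxy _ _
  refine Prod.ext ?_ ?_
  · show applyInstr (τ y _) y _ = applyInstr (τ x _) x _
    rw [show (topple τ x s).2 y = s.2 y from h1, show (topple τ y s).2 x = s.2 x from h2]
    exact applyInstr_comm hxy _ _ _ hx hy
  · show Function.update _ y _ = Function.update _ x _
    rw [show (topple τ x s).2 y = s.2 y from h1, show (topple τ y s).2 x = s.2 x from h2]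
    exact Function.update_comm hxy _ _ _

lemma unstable_persist (τ : V → ℕ → Instr V) (γ : List V) :
    ∀ s : (V → SiteState) × (V → ℕ), ∀ x, x ∉ γ → 2 ≤ (s.1 x).rank →
      2 ≤ ((runSeq τ γ s).1 x).rank := by
  induction γ with
  | nil => intro s x _ h; exact h
  | cons y γ ih =>
      intro s x hx h
      have hxy : x ≠ y := fun hh => hx (by simp [hh])
      exact ih _ x (fun hh => hx (by simp [hh])) (preserve hxy _ _ h)

lemma rearrange (τ : V → ℕ → Instr V) (x : V) (δ : List V) :
    ∀ γ : List V, ∀ s, x ∉ γ → 2 ≤ (s.1 x).rank →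
    LegalSeq τ (γ ++ x :: δ) s →
    LegalSeq τ (x :: (γ ++ δ)) s ∧
      runSeq τ (γ ++ x :: δ) s = runSeq τ (x :: (γ ++ δ)) s := by
  intro γ
  induction γ with
  | nil => intro s _ hx h; exact ⟨h, rfl⟩
  | cons y γ ih =>
      intro s hxγ hx hleg
      have hxy : x ≠ y := fun hh => hxγ (by simp [hh])
      have hxγ' : x ∉ γ := fun hh => hxγ (by simp [hh])
      rw [List.cons_append] at hleg
      obtain ⟨hy, hleg'⟩ := hleg
      have hx' : 2 ≤ ((topple τ y s).1 x).rank := preserve hxy _ _ hx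
      obtain ⟨hleg2, hrun2⟩ := ih (topple τ y s) hxγ' hx' hleg'
      obtain ⟨-, hleg3⟩ := hleg2
      have hcomm := topple_comm τ hxy s hx hy
      constructor
      · refine ⟨hx, preserve (Ne.symm hxy) _ _ hy, ?_⟩
        show LegalSeq τ (γ ++ δ) (topple τ y (topple τ x s))
        rw [hcomm]; exact hleg3
      · show runSeq τ (γ ++ x :: δ) (topple τ y s)
            = runSeq τ (γ ++ δ) (topple τ y (topple τ x s))
        rw [hcomm, hrun2]; rfl

lemma mem_split_first {x : V} {l : List V} (h : x ∈ l) :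
    ∃ γ δ, l = γ ++ x :: δ ∧ x ∉ γ := by
  induction l with
  | nil => cases h
  | cons y l ih =>
      by_cases hxy : x = y
      · subst hxy; exact ⟨[], l, rfl, by simp⟩
      · obtain ⟨γ, δ, h1, h2⟩ := ih (by rcases List.mem_cons.mp h with h | h
                                        · exact absurd h hxy
                                        · exact h)
        exact ⟨y :: γ, δ, by simp [h1], by simp [hxy, h2]⟩

lemma count_le (τ : V → ℕ → Instr V) (U : Finset V) :
    ∀ α : List V, ∀ β s, LegalSeq τ α s → LegalSeq τ β s →
    StableIn (↑U) (runSeq τ β s).1 → (∀ y ∈ α, y ∈ U) →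
    ∀ x, α.count x ≤ β.count x := by
  intro α
  induction α with
  | nil => intro β s _ _ _ _ x; simp
  | cons z α ih =>
      intro β s hα hβ hst hU x
      obtain ⟨hz, hα'⟩ := hα
      have hzβ : z ∈ β := by
        by_contra hzβ
        have h1 := unstable_persist τ β s z hzβ hz
        have h2 := hst z (by exact_mod_cast hU z List.mem_cons_self)
        omega
      obtain ⟨γ, δ, rfl, hzγ⟩ := mem_split_first hzβ
      obtain ⟨hleg2, hrun2⟩ := rearrange τ z δ γ s hzγ hz hβ
      obtain ⟨-, hleg3⟩ := hleg2
      have hst' : StableIn (↑U) (runSeq τ (γ ++ δ) (topple τ z s)).1 := by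
        rw [hrun2] at hst; exact hst
      have h := ih (γ ++ δ) (topple τ z s) hα' hleg3 hst'
        (fun y hy => hU y (List.mem_cons_of_mem _ hy)) x
      simp only [List.count_append, List.count_cons] at h ⊢
      split_ifs <;> omega

lemma run_eq (τ : V → ℕ → Instr V) :
    ∀ α : List V, ∀ β s, LegalSeq τ α s → LegalSeq τ β s →
    (∀ x, α.count x = β.count x) → runSeq τ α s = runSeq τ β s := by
  intro α
  induction α with
  | nil =>
      intro β s _ _ hc
      cases β with
      | nil => rfl
      | cons y β => have := hc y; simp [List.count_cons] at this
  | cons z α ih =>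
      intro β s hα hβ hc
      obtain ⟨hz, hα'⟩ := hα
      have hzβ : z ∈ β := by
        have h := hc z
        simp only [List.count_cons, beq_self_eq_true, if_true] at h
        have : 0 < β.count z := by omega
        exact List.count_pos_iff.mp this
      obtain ⟨γ, δ, rfl, hzγ⟩ := mem_split_first hzβ
      obtain ⟨hleg2, hrun2⟩ := rearrange τ z δ γ s hzγ hz hβ
      obtain ⟨-, hleg3⟩ := hleg2
      have hc' : ∀ x, α.count x = (γ ++ δ).count x := by
        intro x
        have h := hc x
        simp only [List.count_append, List.count_cons] at h ⊢
        split_ifs at h <;> omega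
      have h := ih (γ ++ δ) (topple τ z s) hα' hleg3 hc'
      show runSeq τ α (topple τ z s) = _
      rw [h, hrun2]; rfl

/-- The Abelian property of the Diaconis–Fulton representation: if `α` and `β` are
two legal toppling sequences contained in a finite set `U` that both stabilize the
configuration `η` in `U`, then they topple each site the same number of times and
produce the same final configuration. -/
theorem stmt15 {V : Type*} [DecidableEq V] (τ : V → ℕ → Instr V) (U : Finset V)
    (η : V → SiteState) (α β : List V)
    (hαU : ∀ y ∈ α, y ∈ U) (hβU : ∀ y ∈ β, y ∈ U)
    (hα : LegalSeq τ α (η, fun _ => 0)) (hβ : LegalSeq τ β (η, fun _ => 0))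
    (hαs : StableIn (↑U) (runSeq τ α (η, fun _ => 0)).1)
    (hβs : StableIn (↑U) (runSeq τ β (η, fun _ => 0)).1) :
    (∀ x : V, α.count x = β.count x) ∧
      (runSeq τ α (η, fun _ => 0)).1 = (runSeq τ β (η, fun _ => 0)).1 := by
  refine ⟨fun x => Nat.le_antisymm
      (count_le τ U α β _ hα hβ hβs hαU x)
      (count_le τ U β α _ hβ hα hαs hβU x), ?_⟩
  rw [run_eq τ α β _ hα hβ (fun x => Nat.le_antisymm
      (count_le τ U α β _ hα hβ hβs hαU x)
      (count_le τ U β α _ hβ hα hαs hβU x))]
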